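/- Let q(z₀,z) be a Hurwitz form (homogeneous, nonvanishing on the open right poly-halfplane in d+1 variables) with deg_{z₀} q = n₀. Then the polynomial obtained by the degree reduction operator, q̂(ς₁,…,ς_{n₀}, z) = ∑_{k=0}^{n₀} p_{l−k}(z)·binom(n₀,k)⁻¹·σ_k(ς₁,…,ς_{n₀}) where q = ∑_k p_{l−k}(z) z₀^k and σ_k is the k-th elementary symmetric polynomial, is a Hurwitz form in d + n₀ variables. -/

import Mathlib

open MvPolynomial

section Aux

open Complex Polynomial

/-- Algebraic identity behind the separating functional. -/
lemma numer_identity (x w r : ℂ) :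
    ((starRingEnd ℂ w + x) * ((w - r) * starRingEnd ℂ (x - r))).re
      = normSq (w - r) * x.re + normSq (x - r) * w.re - r.re * normSq (w - x) := by
  simp only [Complex.normSq_apply, Complex.mul_re, Complex.mul_im, Complex.sub_re,
    Complex.sub_im, Complex.add_re, Complex.add_im, Complex.conj_re, Complex.conj_im]
  ring

lemma phi_term_pos {x w : ℂ} (hx : 0 < x.re) (hw : 0 < w.re) {r : ℂ} (hr : r.re ≤ 0) :
    0 < ((starRingEnd ℂ w + x) * ((w - r) / (x - r))).re := by
  have hxr : x - r ≠ 0 := by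
    intro h
    have h2 : (x - r).re = 0 := by rw [h]; simp
    simp only [Complex.sub_re] at h2; linarith
  have hns : 0 < normSq (x - r) := normSq_pos.mpr hxr
  have key : (starRingEnd ℂ w + x) * ((w - r) / (x - r))
      = ((starRingEnd ℂ w + x) * ((w - r) * starRingEnd ℂ (x - r))) / ((normSq (x - r) : ℝ) : ℂ) := by
    rw [div_eq_mul_inv, Complex.inv_def, div_eq_mul_inv, Complex.ofReal_inv]
    ring
  rw [key, Complex.div_ofReal_re, numer_identity]
  have h1 : 0 ≤ normSq (w - r) * x.re := mul_nonneg (normSq_nonneg _) hx.le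
  have h2 : 0 < normSq (x - r) * w.re := mul_pos hns hw
  have h3 : 0 ≤ -r.re * normSq (w - x) := mul_nonneg (by linarith) (normSq_nonneg _)
  have : 0 < normSq (w - r) * x.re + normSq (x - r) * w.re - r.re * normSq (w - x) := by nlinarith
  positivity

lemma re_multiset_sum (s : Multiset ℂ) : s.sum.re = (s.map Complex.re).sum :=
  map_multiset_sum Complex.reAddGroupHom s

/-- The bracket `T` is nonzero. -/
lemma T_ne_zero {x w : ℂ} (hx : 0 < x.re) (hw : 0 < w.re) {N : ℕ} (hN : 1 ≤ N)
    (s : Multiset ℂ) (hs : ∀ r ∈ s, r.re ≤ 0) (hcard : Multiset.card s ≤ N) :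
    (((N - Multiset.card s : ℕ) : ℂ) + (s.map fun r => (w - r) / (x - r)).sum) ≠ 0 := by
  intro h0
  have h := congrArg (fun z => ((starRingEnd ℂ w + x) * z).re) h0
  simp only [mul_zero, Complex.zero_re, mul_add] at h
  rw [Complex.add_re] at h
  have hconst : ((starRingEnd ℂ w + x) * ((N - Multiset.card s : ℕ) : ℂ)).re
      = (N - Multiset.card s : ℕ) * (w.re + x.re) := by
    rw [mul_comm, ← Complex.ofReal_natCast, Complex.re_ofReal_mul]
    simp [Complex.add_re, Complex.conj_re]
  have hsum : ((starRingEnd ℂ w + x) * (s.map fun r => (w - r) / (x - r)).sum).re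
      = ((s.map fun r => ((starRingEnd ℂ w + x) * ((w - r) / (x - r))).re)).sum := by
    rw [← Multiset.sum_map_mul_left, re_multiset_sum, Multiset.map_map]
    rfl
  rw [hconst, hsum] at h
  have hnonneg : (0:ℝ) ≤ ((s.map fun r => ((starRingEnd ℂ w + x) * ((w - r) / (x - r))).re)).sum := by
    apply Multiset.sum_nonneg
    intro a ha
    obtain ⟨r, hr, rfl⟩ := Multiset.mem_map.mp ha
    exact (phi_term_pos hx hw (hs r hr)).le
  have hwx : 0 < w.re + x.re := by linarith
  rcases Nat.eq_zero_or_pos (Multiset.card s) with hm | hm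
  · rw [Multiset.card_eq_zero.mp hm] at h
    simp only [Multiset.map_zero, Multiset.sum_zero, add_zero] at h
    simp only [Multiset.card_zero, Nat.sub_zero] at h
    have hposN : (0:ℝ) < (N : ℝ) * (w.re + x.re) :=
      mul_pos (by exact_mod_cast Nat.cast_pos.mpr hN) hwx
    linarith
  · obtain ⟨r, hr⟩ := Multiset.card_pos_iff_exists_mem.mp hm
    have hmem : ((starRingEnd ℂ w + x) * ((w - r) / (x - r))).re
        ∈ s.map fun r => ((starRingEnd ℂ w + x) * ((w - r) / (x - r))).re :=
      Multiset.mem_map_of_mem _ hr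
    have hpos := phi_term_pos hx hw (hs r hr)
    have hle := Multiset.single_le_sum (fun y hy => by
      obtain ⟨r', hr', rfl⟩ := Multiset.mem_map.mp hy
      exact (phi_term_pos hx hw (hs r' hr')).le) _ hmem
    have hconstnn : (0:ℝ) ≤ (N - Multiset.card s : ℕ) * (w.re + x.re) :=
      mul_nonneg (Nat.cast_nonneg _) hwx.le
    linarith

/-- Logarithmic derivative of a product of linear factors. -/
lemma deriv_prod_eval (x : ℂ) (s : Multiset ℂ) (hs : ∀ r ∈ s, x - r ≠ 0) :
    Polynomial.eval x (Polynomial.derivative (s.map fun r => Polynomial.X - Polynomial.C r).prod)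
      = Polynomial.eval x (s.map fun r => Polynomial.X - Polynomial.C r).prod * (s.map fun r => (x - r)⁻¹).sum := by
  induction s using Multiset.induction with
  | empty => simp
  | cons a t ih =>
    have ha : x - a ≠ 0 := hs a (Multiset.mem_cons_self a t)
    have ht : ∀ r ∈ t, x - r ≠ 0 := fun r hr => hs r (Multiset.mem_cons_of_mem hr)
    simp only [Multiset.map_cons, Multiset.prod_cons, Multiset.sum_cons, derivative_mul,
      derivative_X_sub_C, one_mul, Polynomial.eval_add, Polynomial.eval_mul, Polynomial.eval_sub,
      Polynomial.eval_X, Polynomial.eval_C, ih ht]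
    field_simp

/-- Laguerre-type theorem for the right half plane. -/
lemma laguerre {N : ℕ} (hN : 1 ≤ N) (g : Polynomial ℂ) (hg0 : g ≠ 0) (hdeg : g.natDegree ≤ N)
    (hstab : ∀ ξ : ℂ, 0 < ξ.re → Polynomial.eval ξ g ≠ 0) {x w : ℂ}
    (hx : 0 < x.re) (hw : 0 < w.re) :
    (N : ℂ) * Polynomial.eval x g + (w - x) * Polynomial.eval x (Polynomial.derivative g) ≠ 0 := by
  have hsplits : Splits g := IsAlgClosed.splits g
  have hfact := hsplits.eq_prod_roots
  set s : Multiset ℂ := g.roots with hsdef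
  have hroots : ∀ r ∈ s, r.re ≤ 0 := by
    intro r hr
    by_contra hcon
    exact hstab r (by linarith [not_le.mp hcon]) ((Polynomial.mem_roots hg0).mp hr)
  have hcard : Multiset.card s ≤ N := by
    rw [hsdef, (Polynomial.splits_iff_card_roots).mp hsplits]; exact hdeg
  have hxr : ∀ r ∈ s, x - r ≠ 0 := by
    intro r hr h
    have : (x - r).re = 0 := by rw [h]; simp
    simp only [Complex.sub_re] at this
    have := hroots r hr
    linarith
  have hgx : Polynomial.eval x g ≠ 0 := hstab x hx
  have hQx : Polynomial.eval x (s.map fun r => Polynomial.X - Polynomial.C r).prod ≠ 0 := by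
    intro h
    apply hgx
    rw [hfact]
    simp [h]
  have hderiv : Polynomial.eval x (Polynomial.derivative g)
      = Polynomial.eval x g * (s.map fun r => (x - r)⁻¹).sum := by
    conv_lhs => rw [hfact]
    conv_rhs => rw [hfact]
    rw [Polynomial.derivative_C_mul, Polynomial.eval_mul, Polynomial.eval_C,
      deriv_prod_eval x s hxr, Polynomial.eval_mul, Polynomial.eval_C]
    ring
  rw [hderiv]
  have hT := T_ne_zero hx hw hN s hroots hcard
  have key : (N : ℂ) * Polynomial.eval x g + (w - x) * (Polynomial.eval x g * (s.map fun r => (x - r)⁻¹).sum)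
      = Polynomial.eval x g * (((N - Multiset.card s : ℕ) : ℂ) + (s.map fun r => (w - r) / (x - r)).sum) := by
    have hsum : (s.map fun r => (w - r) / (x - r)).sum
        = ((Multiset.card s : ℂ)) + (w - x) * (s.map fun r => (x - r)⁻¹).sum := by
      have : (s.map fun r => (w - r) / (x - r)) = (s.map fun r => 1 + (w - x) * (x - r)⁻¹) := by
        apply Multiset.map_congr rfl
        intro r hr
        have h1 : x - r ≠ 0 := hxr r hr
        field_simp
        ring
      rw [this, Multiset.sum_map_add, Multiset.sum_map_mul_left, Multiset.map_const',
        Multiset.sum_replicate, nsmul_eq_mul, mul_one]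
    rw [hsum]
    have hNc : ((N - Multiset.card s : ℕ) : ℂ) = (N : ℂ) - (Multiset.card s : ℂ) := by
      push_cast [Nat.cast_sub hcard]; ring
    rw [hNc]
    ring
  rw [key]
  exact mul_ne_zero hgx hT

/-- Coefficient form of the Laguerre lemma. -/
lemma laguerre' (N : ℕ) (hN : 1 ≤ N) (a : ℕ → ℂ)
    (hstab : ∀ ξ : ℂ, 0 < ξ.re → (∑ k ∈ Finset.range (N + 1), a k * ξ ^ k) ≠ 0)
    {x w : ℂ} (hx : 0 < x.re) (hw : 0 < w.re) :
    (∑ k ∈ Finset.range N, (a k * ((N - k : ℕ) : ℂ) + w * (k + 1) * a (k + 1)) * x ^ k) ≠ 0 := by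
  set g : Polynomial ℂ := ∑ k ∈ Finset.range (N + 1), Polynomial.C (a k) * Polynomial.X ^ k with hg
  have hgev : ∀ z : ℂ, Polynomial.eval z g = ∑ k ∈ Finset.range (N + 1), a k * z ^ k := by
    intro z
    rw [hg, Polynomial.eval_finset_sum]
    simp
  have hg0 : g ≠ 0 := by
    intro h
    apply hstab 1 (by norm_num)
    rw [← hgev 1, h, Polynomial.eval_zero]
  have hdeg : g.natDegree ≤ N := by
    apply Polynomial.natDegree_sum_le_of_forall_le
    intro i hi
    exact le_trans (Polynomial.natDegree_C_mul_X_pow_le _ _) (Nat.lt_succ_iff.mp (Finset.mem_range.mp hi))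
  have hstab' : ∀ ζ : ℂ, 0 < ζ.re → Polynomial.eval ζ g ≠ 0 := by
    intro ζ hζ
    rw [hgev]
    exact hstab ζ hζ
  have hlag := laguerre hN g hg0 hdeg hstab' hx hw
  have hgev' : Polynomial.eval x (Polynomial.derivative g)
      = ∑ k ∈ Finset.range (N + 1), a k * k * x ^ (k - 1) := by
    rw [hg, map_sum, Polynomial.eval_finset_sum]
    apply Finset.sum_congr rfl
    intro k _
    rw [Polynomial.derivative_C_mul_X_pow]
    simp
  set D : ℂ := ∑ k ∈ Finset.range (N + 1), a k * k * x ^ (k - 1) with hD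
  have e1 : x * D = ∑ k ∈ Finset.range (N + 1), a k * k * x ^ k := by
    rw [hD, Finset.mul_sum]
    apply Finset.sum_congr rfl
    intro k _
    cases k with
    | zero => norm_num
    | succ m =>
      simp only [Nat.add_sub_cancel]
      rw [pow_succ]
      ring
  have e2 : (N : ℂ) * Polynomial.eval x g - x * D
      = ∑ k ∈ Finset.range N, a k * ((N - k : ℕ) : ℂ) * x ^ k := by
    rw [hgev, e1, Finset.mul_sum, ← Finset.sum_sub_distrib, Finset.sum_range_succ]
    have hlast : (N : ℂ) * (a N * x ^ N) - a N * N * x ^ N = 0 := by ring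
    rw [hlast, add_zero]
    apply Finset.sum_congr rfl
    intro k hk
    have hk' : k < N := Finset.mem_range.mp hk
    have : ((N - k : ℕ) : ℂ) = (N : ℂ) - (k : ℂ) := by
      push_cast [Nat.cast_sub hk'.le]
      ring
    rw [this]
    ring
  have e4 : w * D = ∑ k ∈ Finset.range N, w * ((k : ℂ) + 1) * a (k + 1) * x ^ k := by
    rw [hD, Finset.mul_sum, Finset.sum_range_succ']
    have h0 : w * (a 0 * (0 : ℕ) * x ^ (0 - 1)) = 0 := by simp
    rw [h0, add_zero]
    apply Finset.sum_congr rfl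
    intro k _
    simp only [Nat.add_sub_cancel]
    push_cast
    ring
  have key : (N : ℂ) * Polynomial.eval x g + (w - x) * Polynomial.eval x (Polynomial.derivative g)
      = ∑ k ∈ Finset.range N, (a k * ((N - k : ℕ) : ℂ) + w * (k + 1) * a (k + 1)) * x ^ k := by
    rw [hgev', sub_mul]
    have : (N : ℂ) * Polynomial.eval x g + (w * D - x * D)
        = ((N : ℂ) * Polynomial.eval x g - x * D) + w * D := by ring
    rw [this, e2, e4, ← Finset.sum_add_distrib]
    apply Finset.sum_congr rfl
    intro k _
    push_cast
    ring
  rw [← key]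
  exact hlag

lemma Multiset.esymm_zero' (s : Multiset ℂ) : s.esymm 0 = 1 := by
  simp [Multiset.esymm]

lemma Multiset.esymm_eq_zero {s : Multiset ℂ} {k : ℕ} (h : Multiset.card s < k) :
    s.esymm k = 0 := by
  rw [Multiset.esymm, Multiset.powersetCard_eq_empty _ h]
  simp

lemma Multiset.esymm_cons (a : ℂ) (s : Multiset ℂ) (k : ℕ) :
    (a ::ₘ s).esymm (k + 1) = s.esymm (k + 1) + a * s.esymm k := by
  rw [Multiset.esymm, Multiset.esymm, Multiset.esymm, Multiset.powersetCard_cons,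
    Multiset.map_add, Multiset.sum_add, Multiset.map_map]
  congr 1
  rw [← Multiset.sum_map_mul_left]
  apply congrArg
  apply Multiset.map_congr rfl
  intro t _
  simp [Multiset.prod_cons]

/-- The key induction: degree reduction of a univariate stable family is stable. -/
lemma step_aux (n : ℕ) : ∀ (a : ℕ → ℂ) (s : Multiset ℂ), Multiset.card s = n →
    (∀ z ∈ s, 0 < z.re) →
    (∀ ξ : ℂ, 0 < ξ.re → (∑ k ∈ Finset.range (n + 1), a k * ξ ^ k) ≠ 0) →
    (∑ k ∈ Finset.range (n + 1), a k * ((n.choose k : ℂ))⁻¹ * s.esymm k) ≠ 0 := by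
  induction n with
  | zero =>
    intro a s hcard hpos hstab
    rw [Multiset.card_eq_zero] at hcard
    subst hcard
    have := hstab 1 (by norm_num)
    simpa [Multiset.esymm_zero'] using this
  | succ n ih =>
    intro a s hcard hpos hstab
    have hs0 : s ≠ 0 := by
      intro h
      rw [h] at hcard
      simp at hcard
    obtain ⟨w, hw⟩ := Multiset.exists_mem_of_ne_zero hs0
    obtain ⟨t, rfl⟩ := Multiset.exists_cons_of_mem hw
    have hwre : 0 < w.re := hpos w (Multiset.mem_cons_self w t)
    have htpos : ∀ z ∈ t, 0 < z.re := fun z hz => hpos z (Multiset.mem_cons_of_mem hz)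
    have htcard : Multiset.card t = n := by
      rw [Multiset.card_cons] at hcard
      omega
    set b : ℕ → ℂ := fun k => a k * ((n + 1 - k : ℕ) : ℂ) + w * (k + 1) * a (k + 1) with hb
    have hB : ∀ ξ : ℂ, 0 < ξ.re → (∑ k ∈ Finset.range (n + 1), b k * ξ ^ k) ≠ 0 := by
      intro ξ hξ
      exact laguerre' (n + 1) (by omega) a hstab hξ hwre
    have hibound := ih b t htcard htpos hB
    -- Claim A: the big sum factors
    have hA : (∑ k ∈ Finset.range (n + 2), a k * (((n + 1).choose k : ℂ))⁻¹ * (w ::ₘ t).esymm k)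
        = (((n + 1 : ℕ) : ℂ))⁻¹ *
          (∑ k ∈ Finset.range (n + 1), b k * ((n.choose k : ℂ))⁻¹ * t.esymm k) := by
      have hstar : (∑ k ∈ Finset.range (n + 2), a k * (((n + 1).choose k : ℂ))⁻¹ * (w ::ₘ t).esymm k)
          = ∑ k ∈ Finset.range (n + 1),
              (a k * (((n + 1).choose k : ℂ))⁻¹ + w * a (k + 1) * (((n + 1).choose (k + 1) : ℂ))⁻¹)
                * t.esymm k := by
        rw [Finset.sum_range_succ']
        simp only [Multiset.esymm_cons]
        have h0 : a 0 * (((n + 1).choose 0 : ℂ))⁻¹ * (w ::ₘ t).esymm 0 = a 0 := by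
          simp [Multiset.esymm_zero']
        rw [h0]
        have hsplit : ∀ k ∈ Finset.range (n + 1),
            a (k + 1) * (((n + 1).choose (k + 1) : ℂ))⁻¹ * (t.esymm (k + 1) + w * t.esymm k)
              = a (k + 1) * (((n + 1).choose (k + 1) : ℂ))⁻¹ * t.esymm (k + 1)
                + w * a (k + 1) * (((n + 1).choose (k + 1) : ℂ))⁻¹ * t.esymm k := by
          intro k _
          ring
        rw [Finset.sum_congr rfl hsplit, Finset.sum_add_distrib]
        have hshift : (∑ k ∈ Finset.range (n + 1),
            a (k + 1) * (((n + 1).choose (k + 1) : ℂ))⁻¹ * t.esymm (k + 1))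
            = (∑ k ∈ Finset.range (n + 1), a k * (((n + 1).choose k : ℂ))⁻¹ * t.esymm k) - a 0 := by
          have h1 := Finset.sum_range_succ' (fun k => a k * (((n + 1).choose k : ℂ))⁻¹ * t.esymm k) (n + 1)
          have h2 := Finset.sum_range_succ (fun k => a k * (((n + 1).choose k : ℂ))⁻¹ * t.esymm k) (n + 1)
          have hz : t.esymm (n + 1) = 0 := Multiset.esymm_eq_zero (by omega)
          simp only [Nat.choose_zero_right, Nat.cast_one, inv_one, Multiset.esymm_zero',
            mul_one, hz, mul_zero, add_zero] at h1 h2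
          rw [eq_sub_iff_add_eq, ← h1, h2]
        rw [hshift]
        simp only [add_mul]
        rw [Finset.sum_add_distrib]
        ring
      rw [hstar, Finset.mul_sum]
      apply Finset.sum_congr rfl
      intro k hk
      have hk' : k ≤ n := Nat.lt_succ_iff.mp (Finset.mem_range.mp hk)
      -- choose identities
      have id1 : (n + 1 - k) * (n + 1).choose k = (n + 1) * n.choose k := by
        have h := Nat.choose_mul_succ_eq n k
        rw [mul_comm ((n+1).choose k) _] at h
        rw [← h, mul_comm]
      have id2 : (k + 1) * (n + 1).choose (k + 1) = (n + 1) * n.choose k := by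
        rw [mul_comm]
        exact (Nat.add_one_mul_choose_eq n k).symm
      have hc1 : ((n + 1).choose k : ℂ) ≠ 0 := by
        exact_mod_cast Nat.cast_ne_zero.mpr (Nat.choose_pos (by omega : k ≤ n + 1)).ne'
      have hc2 : ((n + 1).choose (k + 1) : ℂ) ≠ 0 := by
        exact_mod_cast Nat.cast_ne_zero.mpr (Nat.choose_pos (by omega : k + 1 ≤ n + 1)).ne'
      have hc3 : ((n.choose k : ℂ)) ≠ 0 := by
        exact_mod_cast Nat.cast_ne_zero.mpr (Nat.choose_pos hk').ne'
      have hc4 : ((n + 1 : ℕ) : ℂ) ≠ 0 := Nat.cast_ne_zero.mpr (Nat.succ_ne_zero n)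
      have c1 : ((n + 1 - k : ℕ) : ℂ) * ((n + 1).choose k : ℂ) = ((n + 1 : ℕ) : ℂ) * (n.choose k : ℂ) := by
        exact_mod_cast congrArg (Nat.cast : ℕ → ℂ) id1
      have c2 : ((k + 1 : ℕ) : ℂ) * ((n + 1).choose (k + 1) : ℂ) = ((n + 1 : ℕ) : ℂ) * (n.choose k : ℂ) := by
        exact_mod_cast congrArg (Nat.cast : ℕ → ℂ) id2
      push_cast at c1 c2
      have hc4' : ((n : ℂ) + 1) ≠ 0 := by
        have := hc4
        push_cast at this
        exact this
      have hNC : ((n : ℂ) + 1) * (n.choose k : ℂ) ≠ 0 := mul_ne_zero hc4' hc3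
      have e1 : (((n + 1).choose k : ℂ))⁻¹
          = ((n + 1 - k : ℕ) : ℂ) / (((n : ℂ) + 1) * (n.choose k : ℂ)) := by
        rw [eq_div_iff hNC, ← c1]
        field_simp
      have e2' : (((n + 1).choose (k + 1) : ℂ))⁻¹
          = ((k : ℂ) + 1) / (((n : ℂ) + 1) * (n.choose k : ℂ)) := by
        rw [eq_div_iff hNC, ← c2]
        field_simp
      rw [hb, e1, e2']
      push_cast
      field_simp
    rw [show n + 1 + 1 = n + 2 from rfl, hA]
    have hne : ((n + 1 : ℕ) : ℂ) ≠ 0 := Nat.cast_ne_zero.mpr (Nat.succ_ne_zero n)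
    exact mul_ne_zero (inv_ne_zero hne) hibound

lemma esymm_isHomog (σ : Type*) [Fintype σ] (k : ℕ) :
    (MvPolynomial.esymm σ ℝ k).IsHomogeneous k := by
  rw [MvPolynomial.esymm]
  apply MvPolynomial.IsHomogeneous.sum
  intro t ht
  have hcard : t.card = k := (Finset.mem_powersetCard.mp ht).2
  have h := MvPolynomial.IsHomogeneous.prod t (fun i => MvPolynomial.X i) (fun _ => 1)
    (fun i _ => MvPolynomial.isHomogeneous_X ℝ i)
  simpa [Finset.sum_const, hcard] using h

end Aux

theorem degree_reduction_preserves_hurwitz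
    {d n₀ l : ℕ} (hn₀l : n₀ ≤ l)
    (p : Fin (n₀ + 1) → MvPolynomial (Fin d) ℝ)
    (hhom : ∀ k : Fin (n₀ + 1), (p k).IsHomogeneous (l - (k : ℕ)))
    (htop : p (Fin.last n₀) ≠ 0)
    (hHurwitz : ∀ (z₀ : ℂ) (z : Fin d → ℂ), 0 < z₀.re → (∀ j, 0 < (z j).re) →
      (∑ k : Fin (n₀ + 1), aeval z (p k) * z₀ ^ (k : ℕ)) ≠ 0) :
    (∑ k : Fin (n₀ + 1),
        C ((Nat.choose n₀ (k : ℕ) : ℝ)⁻¹) *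
          rename Sum.inr (p k) *
          rename (Sum.inl : Fin n₀ → Fin n₀ ⊕ Fin d)
            (esymm (Fin n₀) ℝ (k : ℕ))).IsHomogeneous l ∧
    ∀ w : Fin n₀ ⊕ Fin d → ℂ, (∀ j, 0 < (w j).re) →
      aeval w (∑ k : Fin (n₀ + 1),
        C ((Nat.choose n₀ (k : ℕ) : ℝ)⁻¹) *
          rename Sum.inr (p k) *
          rename (Sum.inl : Fin n₀ → Fin n₀ ⊕ Fin d)
            (esymm (Fin n₀) ℝ (k : ℕ))) ≠ 0 := by
  constructor
  · apply MvPolynomial.IsHomogeneous.sum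
    intro k _
    have h1 := (MvPolynomial.isHomogeneous_C (Fin n₀ ⊕ Fin d)
      (((n₀.choose (k : ℕ) : ℝ))⁻¹)).mul ((hhom k).rename_isHomogeneous (f := Sum.inr))
    have h2 := (esymm_isHomog (Fin n₀) (k : ℕ)).rename_isHomogeneous
      (f := (Sum.inl : Fin n₀ → Fin n₀ ⊕ Fin d))
    have h3 := h1.mul h2
    have heq : 0 + (l - (k : ℕ)) + (k : ℕ) = l := by
      have := Fin.is_le k
      omega
    rwa [heq] at h3
  · intro w hw
    set z : Fin d → ℂ := w ∘ Sum.inr with hz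
    set s : Multiset ℂ := Finset.univ.val.map (w ∘ Sum.inl) with hs
    have hscard : Multiset.card s = n₀ := by simp [hs]
    have hspos : ∀ ζ ∈ s, 0 < ζ.re := by
      intro ζ hζ
      obtain ⟨j, _, rfl⟩ := Multiset.mem_map.mp hζ
      exact hw (Sum.inl j)
    set a : ℕ → ℂ := fun m => if h : m < n₀ + 1 then aeval z (p ⟨m, h⟩) else 0 with ha
    have hak : ∀ k : Fin (n₀ + 1), a (k : ℕ) = aeval z (p k) := by
      intro k
      simp [ha, k.isLt]
      intro h
      have := k.isLt
      omega
    have hstab : ∀ ξ : ℂ, 0 < ξ.re → (∑ m ∈ Finset.range (n₀ + 1), a m * ξ ^ m) ≠ 0 := by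
      intro ξ hξ
      rw [← Fin.sum_univ_eq_sum_range (fun m => a m * ξ ^ m) (n₀ + 1)]
      have hre : (∑ k : Fin (n₀ + 1), a (k : ℕ) * ξ ^ (k : ℕ))
          = ∑ k : Fin (n₀ + 1), aeval z (p k) * ξ ^ (k : ℕ) := by
        apply Finset.sum_congr rfl
        intro k _
        rw [hak]
      rw [hre]
      exact hHurwitz ξ z hξ (fun j => hw (Sum.inr j))
    have hmain := step_aux n₀ a s hscard hspos hstab
    have hev : aeval w (∑ k : Fin (n₀ + 1),
        C ((Nat.choose n₀ (k : ℕ) : ℝ)⁻¹) *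
          rename Sum.inr (p k) *
          rename (Sum.inl : Fin n₀ → Fin n₀ ⊕ Fin d)
            (esymm (Fin n₀) ℝ (k : ℕ)))
        = ∑ m ∈ Finset.range (n₀ + 1), a m * ((n₀.choose m : ℂ))⁻¹ * s.esymm m := by
      rw [map_sum, ← Fin.sum_univ_eq_sum_range
        (fun m => a m * ((n₀.choose m : ℂ))⁻¹ * s.esymm m) (n₀ + 1)]
      apply Finset.sum_congr rfl
      intro k _
      rw [map_mul, map_mul, aeval_C, aeval_rename, aeval_rename,
        aeval_esymm_eq_multiset_esymm, hak]
      have hcast : (algebraMap ℝ ℂ) ((n₀.choose (k : ℕ) : ℝ))⁻¹ = ((n₀.choose (k : ℕ) : ℂ))⁻¹ := by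
        simp [Complex.coe_algebraMap]
      rw [hcast]
      ring
    rw [hev]
    exact hmain
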